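/- Let P be an irreducible aperiodic stochastic matrix on a finite state space X with stationary distribution d, let Π = e dᵀ be the matrix with every row equal to dᵀ, and let Z = Σ_{k=0}^∞ (P − Π)^k be the fundamental matrix of P. Then for any cost function g : X → ℝ, the function h := Z(g − (dᵀg)e) satisfies the Poisson equation g(x) − dᵀg + Σ_y P(x,y) h(y) − h(x) = 0 for all x ∈ X, and moreover dᵀh = 0. -/

import Mathlib

open Matrix Finset

lemma aux_submul {X : Type*} [Fintype X] (A B : Matrix X X ℝ) :
    ∑ x, ∑ y, |(A * B) x y| ≤ (∑ x, ∑ y, |A x y|) * (∑ x, ∑ y, |B x y|) := by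
  have h1 : ∀ x y, |(A * B) x y| ≤ ∑ z, |A x z| * |B z y| := by
    intro x y
    rw [Matrix.mul_apply]
    refine (Finset.abs_sum_le_sum_abs _ _).trans ?_
    simp [abs_mul, le_refl]
  calc ∑ x, ∑ y, |(A * B) x y| ≤ ∑ x, ∑ y, ∑ z, |A x z| * |B z y| := by
        refine Finset.sum_le_sum fun x _ => Finset.sum_le_sum fun y _ => h1 x y
    _ = ∑ x, ∑ z, |A x z| * ∑ y, |B z y| := by
        refine Finset.sum_congr rfl fun x _ => ?_
        rw [Finset.sum_comm]
        exact Finset.sum_congr rfl fun z _ => (Finset.mul_sum _ _ _).symm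
    _ ≤ ∑ x, ∑ z, |A x z| * (∑ z', ∑ y, |B z' y|) := by
        refine Finset.sum_le_sum fun x _ => Finset.sum_le_sum fun z _ => ?_
        refine mul_le_mul_of_nonneg_left ?_ (abs_nonneg _)
        exact Finset.single_le_sum (f := fun z' => ∑ y, |B z' y|)
          (fun i _ => Finset.sum_nonneg fun y _ => abs_nonneg _) (Finset.mem_univ z)
    _ = (∑ x, ∑ y, |A x y|) * (∑ x, ∑ y, |B x y|) := by
        refine Eq.trans (Finset.sum_congr rfl fun x _ => (Finset.sum_mul _ _ _).symm) ?_
        rw [← Finset.sum_mul]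

lemma aux_contract {X : Type*} [Fintype X] (S : Matrix X X ℝ) (α : ℝ)
    (hS : ∀ x y, α ≤ S x y) (hS1 : ∀ x, ∑ y, S x y = 1)
    (v : X → ℝ) (hv : ∑ x, v x = 0) :
    ∑ y, |∑ x, v x * S x y| ≤ (1 - (Fintype.card X : ℝ) * α) * ∑ x, |v x| := by
  have hvS : ∀ y, ∑ x, v x * S x y = ∑ x, v x * (S x y - α) := by
    intro y
    simp only [mul_sub]
    rw [Finset.sum_sub_distrib, ← Finset.sum_mul, hv, zero_mul, sub_zero]
  have hT0 : ∀ x y, 0 ≤ S x y - α := fun x y => sub_nonneg.2 (hS x y)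
  calc ∑ y, |∑ x, v x * S x y| ≤ ∑ y, ∑ x, |v x| * (S x y - α) := by
        refine Finset.sum_le_sum fun y _ => ?_
        rw [hvS y]
        refine (Finset.abs_sum_le_sum_abs _ _).trans ?_
        refine Finset.sum_le_sum fun x _ => ?_
        rw [abs_mul, abs_of_nonneg (hT0 x y)]
    _ = ∑ x, |v x| * (1 - (Fintype.card X : ℝ) * α) := by
        rw [Finset.sum_comm]
        refine Finset.sum_congr rfl fun x _ => ?_
        rw [← Finset.mul_sum]
        congr 1
        rw [Finset.sum_sub_distrib, hS1 x, Finset.sum_const, Finset.card_univ, nsmul_eq_mul]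
    _ = (1 - (Fintype.card X : ℝ) * α) * ∑ x, |v x| := by
        rw [← Finset.sum_mul, mul_comm]

/-- For an irreducible aperiodic (primitive) stochastic matrix `P` on a finite
state space with stationary distribution `d`, the function
`h = Z (g - (dᵀg) e)`, where `Z = Σₖ (P − Π)^k` is the fundamental matrix and
`Π = e dᵀ`, solves the Poisson equation, and `dᵀ h = 0`. -/
theorem stmt_2 (X : Type*) [Fintype X] [DecidableEq X] [Nonempty X]
    (P : Matrix X X ℝ)
    (hP0 : ∀ x y, 0 ≤ P x y) (hP1 : ∀ x, ∑ y, P x y = 1)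
    (hprim : ∃ N : ℕ, ∀ x y, 0 < (P ^ N) x y)
    (d : X → ℝ) (hd0 : ∀ x, 0 ≤ d x) (hd1 : ∑ x, d x = 1)
    (hstat : ∀ y, ∑ x, d x * P x y = d y)
    (g : X → ℝ) :
    let Pi : Matrix X X ℝ := Matrix.of fun _ y => d y
    let Z : Matrix X X ℝ := ∑' k : ℕ, (P - Pi) ^ k
    let h : X → ℝ := Z.mulVec (fun x => g x - ∑ y, d y * g y)
    (∀ x, g x - (∑ y, d y * g y) + (∑ y, P x y * h y) - h x = 0)
      ∧ ∑ x, d x * h x = 0 := by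
  intro Pi Z h
  set f : X → ℝ := fun x => g x - ∑ y, d y * g y with hfdef
  set Q : Matrix X X ℝ := P - Pi with hQdef
  have hPiapp : ∀ x y, Pi x y = d y := fun _ _ => rfl
  -- powers are stochastic
  have hPk1 : ∀ (k : ℕ) (x : X), ∑ y, (P ^ k) x y = 1 := by
    intro k
    induction k with
    | zero => intro x; simp [Matrix.one_apply]
    | succ n ih =>
      intro x
      rw [pow_succ]
      simp only [Matrix.mul_apply]
      rw [Finset.sum_comm]
      calc ∑ z, ∑ y, (P ^ n) x z * P z y
          = ∑ z, (P ^ n) x z * ∑ y, P z y := by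
            exact Finset.sum_congr rfl fun z _ => (Finset.mul_sum _ _ _).symm
        _ = 1 := by simp only [hP1, mul_one]; exact ih x
  have hPk0 : ∀ (k : ℕ) (x y : X), 0 ≤ (P ^ k) x y := by
    intro k
    induction k with
    | zero => intro x y; rw [pow_zero]; rw [Matrix.one_apply]; positivity
    | succ n ih =>
      intro x y
      rw [pow_succ, Matrix.mul_apply]
      exact Finset.sum_nonneg fun z _ => mul_nonneg (ih x z) (hP0 z y)
  have hdPk : ∀ (k : ℕ) (y : X), ∑ x, d x * (P ^ k) x y = d y := by
    intro k
    induction k with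
    | zero => intro y; simp [Matrix.one_apply, mul_ite]
    | succ n ih =>
      intro y
      rw [pow_succ]
      simp only [Matrix.mul_apply, Finset.mul_sum]
      rw [Finset.sum_comm]
      calc ∑ z, ∑ x, d x * ((P ^ n) x z * P z y)
          = ∑ z, (∑ x, d x * (P ^ n) x z) * P z y := by
            refine Finset.sum_congr rfl fun z _ => ?_
            rw [Finset.sum_mul]
            exact Finset.sum_congr rfl fun x _ => (mul_assoc _ _ _).symm
        _ = d y := by simp only [ih]; exact hstat y
  -- a positive power
  obtain ⟨N, hN⟩ := hprim
  obtain ⟨x₀⟩ := ‹Nonempty X›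
  set α : ℝ := Finset.univ.inf' (Finset.univ_nonempty (α := X × X))
      (fun p : X × X => (P ^ N) p.1 p.2) with hαdef
  have hα0 : 0 < α := by
    rw [hαdef, Finset.lt_inf'_iff]
    intro p _
    exact hN p.1 p.2
  have hαle : ∀ z y, α ≤ (P ^ N) z y := by
    intro z y
    exact Finset.inf'_le _ (Finset.mem_univ (z, y))
  set S : Matrix X X ℝ := P ^ (N + 1) with hSdef
  have hSα : ∀ x y, α ≤ S x y := by
    intro x y
    rw [hSdef, pow_succ']
    rw [Matrix.mul_apply]
    calc α = ∑ z, P x z * α := by rw [← Finset.sum_mul, hP1, one_mul]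
      _ ≤ ∑ z, P x z * (P ^ N) z y :=
        Finset.sum_le_sum fun z _ => mul_le_mul_of_nonneg_left (hαle z y) (hP0 x z)
  set r : ℝ := 1 - (Fintype.card X : ℝ) * α with hrdef
  have hcard : 0 < (Fintype.card X : ℝ) := by positivity
  have hr1 : r < 1 := by
    rw [hrdef]
    nlinarith
  have hr0 : 0 ≤ r := by
    have h1 : (Fintype.card X : ℝ) * α ≤ 1 := by
      calc (Fintype.card X : ℝ) * α = ∑ _y : X, α := by
            rw [Finset.sum_const, Finset.card_univ, nsmul_eq_mul]
        _ ≤ ∑ y, S x₀ y := Finset.sum_le_sum fun y _ => hSα x₀ y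
        _ = 1 := hPk1 (N + 1) x₀
    rw [hrdef]; linarith
  -- row-wise decay
  have hrow : ∀ (k : ℕ) (x : X), ∑ y, |(P ^ ((N + 1) * k)) x y - d y| ≤ 2 * r ^ k := by
    intro k
    induction k with
    | zero =>
      intro x
      have hone : ∑ y, (1 : Matrix X X ℝ) x y = 1 := by simpa using hPk1 0 x
      have hb : ∑ y, |(1 : Matrix X X ℝ) x y - d y| ≤ 2 := by
        calc ∑ y, |(1 : Matrix X X ℝ) x y - d y|
            ≤ ∑ y, ((1 : Matrix X X ℝ) x y + d y) := by
              refine Finset.sum_le_sum fun y _ => ?_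
              refine (abs_sub _ _).trans ?_
              rw [abs_of_nonneg (by rw [Matrix.one_apply]; positivity),
                abs_of_nonneg (hd0 y)]
          _ = 2 := by
              rw [Finset.sum_add_distrib, hd1, hone]; norm_num
      simpa using hb
    | succ n ih =>
      intro x
      have hmul : P ^ ((N + 1) * (n + 1)) = P ^ ((N + 1) * n) * S := by
        have he : (N + 1) * (n + 1) = (N + 1) * n + (N + 1) := by ring
        rw [he, pow_add, hSdef]
      set v : X → ℝ := fun z => (P ^ ((N + 1) * n)) x z - d z with hvdef
      have hv0 : ∑ z, v z = 0 := by
        simp only [hvdef]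
        rw [Finset.sum_sub_distrib, hPk1, hd1, sub_self]
      have hrew : ∀ y, (P ^ ((N + 1) * (n + 1))) x y - d y = ∑ z, v z * S z y := by
        intro y
        simp only [hvdef, sub_mul]
        rw [Finset.sum_sub_distrib]
        have h2 : ∑ z, d z * S z y = d y := hdPk (N + 1) y
        rw [h2, hmul, Matrix.mul_apply]
      calc ∑ y, |(P ^ ((N + 1) * (n + 1))) x y - d y|
          = ∑ y, |∑ z, v z * S z y| := by
            exact Finset.sum_congr rfl fun y _ => by rw [hrew y]
        _ ≤ r * ∑ z, |v z| := by
            have := aux_contract S α hSα (hPk1 (N + 1)) v hv0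
            rw [← hrdef] at this
            exact this
        _ ≤ r * (2 * r ^ n) := mul_le_mul_of_nonneg_left (ih x) hr0
        _ = 2 * r ^ (n + 1) := by ring
  -- Q powers
  have hPPi : P ^ 1 * Pi = Pi := by
    ext x y
    rw [Matrix.mul_apply]
    simp only [hPiapp]
    rw [← Finset.sum_mul, hPk1, one_mul]
  have hQpow : ∀ k : ℕ, Q ^ (k + 1) = P ^ (k + 1) - Pi := by
    intro k
    induction k with
    | zero => rw [pow_one, pow_one]
    | succ n ih =>
      have hPnPi : P ^ (n + 1) * Pi = Pi := by
        ext x y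
        rw [Matrix.mul_apply]
        simp only [hPiapp]
        rw [← Finset.sum_mul, hPk1, one_mul]
      have hPiP : Pi * P = Pi := by
        ext x y
        rw [Matrix.mul_apply]
        simp only [hPiapp]
        exact hstat y
      have hPiPi : Pi * Pi = Pi := by
        ext x y
        rw [Matrix.mul_apply]
        simp only [hPiapp]
        rw [← Finset.sum_mul, hd1, one_mul]
      calc Q ^ (n + 2) = Q ^ (n + 1) * Q := by rw [pow_succ]
        _ = (P ^ (n + 1) - Pi) * (P - Pi) := by rw [ih, hQdef]
        _ = P ^ (n + 1) * P - P ^ (n + 1) * Pi - (Pi * P - Pi * Pi) := by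
            rw [sub_mul, mul_sub, mul_sub]
        _ = P ^ (n + 2) - Pi := by
            rw [hPnPi, hPiP, hPiPi, sub_self, sub_zero, ← pow_succ]
  -- total l1 norm
  set a : Matrix X X ℝ → ℝ := fun A => ∑ x, ∑ y, |A x y| with hadef
  have ha0 : ∀ A, 0 ≤ a A := fun A =>
    Finset.sum_nonneg fun x _ => Finset.sum_nonneg fun y _ => abs_nonneg _
  have haelem : ∀ A (x y : X), |A x y| ≤ a A := by
    intro A x y
    calc |A x y| ≤ ∑ y', |A x y'| :=
          Finset.single_le_sum (f := fun y' => |A x y'|)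
            (fun i _ => abs_nonneg _) (Finset.mem_univ y)
      _ ≤ ∑ x', ∑ y', |A x' y'| :=
          Finset.single_le_sum (f := fun x' => ∑ y', |A x' y'|)
            (fun i _ => Finset.sum_nonneg fun _ _ => abs_nonneg _) (Finset.mem_univ x)
  -- choose m with a (Q ^ m) < 1
  obtain ⟨n₀, hn₀⟩ := exists_pow_lt_of_lt_one
    (x := 1 / (2 * (Fintype.card X : ℝ) + 1)) (by positivity) hr1
  set m : ℕ := (N + 1) * (n₀ + 1) with hmdef
  have hm0 : m ≠ 0 := by positivity
  have haQm : a (Q ^ m) < 1 := by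
    obtain ⟨k', hk'⟩ : ∃ k', m = k' + 1 := ⟨m - 1, by omega⟩
    have hQm : Q ^ m = P ^ m - Pi := by rw [hk']; exact hQpow k'
    have h1 : a (Q ^ m) ≤ (Fintype.card X : ℝ) * (2 * r ^ (n₀ + 1)) := by
      rw [hadef, hQm]
      calc ∑ x, ∑ y, |(P ^ m - Pi) x y| = ∑ x, ∑ y, |(P ^ m) x y - d y| := by
            refine Finset.sum_congr rfl fun x _ => Finset.sum_congr rfl fun y _ => ?_
            rw [Matrix.sub_apply, hPiapp]
        _ ≤ ∑ _x : X, 2 * r ^ (n₀ + 1) :=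
            Finset.sum_le_sum fun x _ => hrow (n₀ + 1) x
        _ = (Fintype.card X : ℝ) * (2 * r ^ (n₀ + 1)) := by
            rw [Finset.sum_const, Finset.card_univ, nsmul_eq_mul]
    have h2 : r ^ (n₀ + 1) ≤ r ^ n₀ := by
      rw [pow_succ]
      nlinarith [pow_nonneg hr0 n₀]
    have h3 : r ^ n₀ < 1 / (2 * (Fintype.card X : ℝ) + 1) := hn₀
    calc a (Q ^ m) ≤ (Fintype.card X : ℝ) * (2 * r ^ (n₀ + 1)) := h1
      _ ≤ (Fintype.card X : ℝ) * (2 * r ^ n₀) := by nlinarith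
      _ < 1 := by
        have hpos : 0 < 2 * (Fintype.card X : ℝ) + 1 := by positivity
        have h3' : r ^ n₀ * (2 * (Fintype.card X : ℝ) + 1) < 1 :=
          (lt_div_iff₀ hpos).mp h3
        nlinarith [pow_nonneg hr0 n₀]
  -- geometric bound on a (Q ^ k)
  set c : ℝ := max (a (Q ^ m)) 2⁻¹ with hcdef
  have hc0 : (0 : ℝ) < c := lt_max_of_lt_right (by norm_num)
  have hc1 : c < 1 := max_lt haQm (by norm_num)
  have hcm : a (Q ^ m) ≤ c := le_max_left _ _
  set t : ℝ := c ^ ((m : ℝ)⁻¹) with htdef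
  have htm : t ^ m = c := Real.rpow_inv_natCast_pow hc0.le hm0
  have ht0 : (0 : ℝ) < t := Real.rpow_pos_of_pos hc0 _
  have ht1 : t < 1 := Real.rpow_lt_one hc0.le hc1 (by positivity)
  set K : ℝ := (∑ i ∈ Finset.range m, a (Q ^ i)) + 1 with hKdef
  have hK0 : (0 : ℝ) < K := by
    have := Finset.sum_nonneg (s := Finset.range m) fun i _ => ha0 (Q ^ i)
    rw [hKdef]; linarith
  have hKle : ∀ i, i < m → a (Q ^ i) ≤ K := by
    intro i hi
    rw [hKdef]
    have h1 : a (Q ^ i) ≤ ∑ j ∈ Finset.range m, a (Q ^ j) :=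
      Finset.single_le_sum (f := fun j => a (Q ^ j))
        (fun j _ => ha0 _) (Finset.mem_range.mpr hi)
    linarith
  have hsubpow : ∀ (q : ℕ) (B : Matrix X X ℝ), a ((Q ^ m) ^ q * B) ≤ c ^ q * a B := by
    intro q
    induction q with
    | zero => intro B; simp
    | succ n ih =>
      intro B
      have h1 : (Q ^ m) ^ (n + 1) * B = Q ^ m * ((Q ^ m) ^ n * B) := by
        rw [pow_succ', mul_assoc]
      calc a ((Q ^ m) ^ (n + 1) * B) = a (Q ^ m * ((Q ^ m) ^ n * B)) := by rw [h1]
        _ ≤ a (Q ^ m) * a ((Q ^ m) ^ n * B) := aux_submul _ _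
        _ ≤ c * (c ^ n * a B) := by
            refine mul_le_mul hcm (ih B) (ha0 _) hc0.le
        _ = c ^ (n + 1) * a B := by ring
  have hbound : ∀ k : ℕ, a (Q ^ k) ≤ K / c * t ^ k := by
    intro k
    have hdm : m * (k / m) + k % m = k := Nat.div_add_mod k m
    have h1 : a (Q ^ k) ≤ c ^ (k / m) * a (Q ^ (k % m)) := by
      calc a (Q ^ k) = a ((Q ^ m) ^ (k / m) * Q ^ (k % m)) := by
            rw [← pow_mul, ← pow_add, hdm]
        _ ≤ _ := hsubpow _ _
    have h2 : a (Q ^ (k % m)) ≤ K := hKle _ (Nat.mod_lt _ (Nat.pos_of_ne_zero hm0))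
    have h3 : c ^ (k / m + 1) ≤ t ^ k := by
      calc c ^ (k / m + 1) = t ^ (m * (k / m + 1)) := by rw [pow_mul, htm]
        _ ≤ t ^ k := by
            refine pow_le_pow_of_le_one ht0.le ht1.le ?_
            have h5 : k % m < m := Nat.mod_lt _ (Nat.pos_of_ne_zero hm0)
            have h6 : m * (k / m + 1) = m * (k / m) + m := by ring
            omega
    calc a (Q ^ k) ≤ c ^ (k / m) * K := by
          refine h1.trans (mul_le_mul_of_nonneg_left h2 (pow_nonneg hc0.le _))
      _ = K / c * c ^ (k / m + 1) := by
          field_simp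
          ring
      _ ≤ K / c * t ^ k := by
          refine mul_le_mul_of_nonneg_left h3 (by positivity)
  have hgeo : Summable fun k : ℕ => K / c * t ^ k :=
    (summable_geometric_of_lt_one ht0.le ht1).mul_left _
  have hQG : ∀ (k : ℕ) (x y : X), |(Q ^ k) x y| ≤ K / c * t ^ k :=
    fun k x y => (haelem _ x y).trans (hbound k)
  have hsumM : Summable fun k : ℕ => Q ^ k := by
    show Summable fun k : ℕ => Matrix.of.symm (Q ^ k)
    rw [_root_.Pi.summable]
    intro x
    rw [_root_.Pi.summable]
    intro y
    refine Summable.of_norm_bounded hgeo fun k => ?_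
    simpa using hQG k x y
  -- the solution sequence
  set w : ℕ → X → ℝ := fun k => (Q ^ k).mulVec f with hwdef
  have hwapp : ∀ (k : ℕ) (x : X), w k x = ∑ y, (Q ^ k) x y * f y := by
    intro k x
    simp [hwdef, Matrix.mulVec, dotProduct]
  have hsum_each : ∀ x y : X, Summable fun k => (Q ^ k) x y * f y := by
    intro x y
    refine Summable.of_norm_bounded (hgeo.mul_right |f y|) fun k => ?_
    rw [Real.norm_eq_abs, abs_mul]
    exact mul_le_mul_of_nonneg_right (hQG k x y) (abs_nonneg _)
  have hwsum : ∀ x : X, Summable fun k => w k x := by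
    intro x
    refine Summable.of_norm_bounded (hgeo.mul_right (∑ y, |f y|)) fun k => ?_
    rw [Real.norm_eq_abs, hwapp]
    calc |∑ y, (Q ^ k) x y * f y| ≤ ∑ y, |(Q ^ k) x y * f y| :=
          Finset.abs_sum_le_sum_abs _ _
      _ ≤ ∑ y, K / c * t ^ k * |f y| := by
          refine Finset.sum_le_sum fun y _ => ?_
          rw [abs_mul]
          exact mul_le_mul_of_nonneg_right (hQG k x y) (abs_nonneg _)
      _ = K / c * t ^ k * ∑ y, |f y| := by rw [← Finset.mul_sum]
  have hZentry : ∀ x y : X, Z x y = ∑' k, (Q ^ k) x y := by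
    intro x y
    have hZ : Z = ∑' k : ℕ, Q ^ k := rfl
    have hsumM' : Summable fun k : ℕ => Matrix.of.symm (Q ^ k) := hsumM
    rw [hZ]
    have e : (∑' k : ℕ, Matrix.of.symm (Q ^ k)) x y = ∑' k, (Q ^ k) x y := by
      rw [tsum_apply hsumM', tsum_apply ((_root_.Pi.summable.mp hsumM') x)]; rfl
    exact e
  have hh : ∀ x : X, h x = ∑' k, w k x := by
    intro x
    have h1 : h x = ∑ y, Z x y * f y := rfl
    rw [h1]
    calc ∑ y, Z x y * f y = ∑ y, ∑' k, (Q ^ k) x y * f y := by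
          refine Finset.sum_congr rfl fun y _ => ?_
          rw [hZentry x y, tsum_mul_right]
      _ = ∑' k, ∑ y, (Q ^ k) x y * f y :=
          (Summable.tsum_finsetSum fun y _ => hsum_each x y).symm
      _ = ∑' k, w k x := tsum_congr fun k => (hwapp k x).symm
  have hQapp : ∀ x y : X, Q x y = P x y - d y := by
    intro x y
    rw [hQdef, Matrix.sub_apply, hPiapp]
  have hstep : ∀ k : ℕ, (∑ z, d z * w k z = 0) →
      ∀ x, ∑ y, P x y * w k y = w (k + 1) x := by
    intro k hk x
    have hQw : ∑ y, Q x y * w k y = w (k + 1) x := by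
      have h1 : w (k + 1) = Q.mulVec (w k) := by
        rw [hwdef]
        show (Q ^ (k + 1)).mulVec f = Q.mulVec ((Q ^ k).mulVec f)
        rw [pow_succ', Matrix.mulVec_mulVec]
      rw [h1]
      simp [Matrix.mulVec, dotProduct]
    calc ∑ y, P x y * w k y = ∑ y, (Q x y * w k y + d y * w k y) := by
          refine Finset.sum_congr rfl fun y _ => ?_
          rw [hQapp]
          ring
      _ = (∑ y, Q x y * w k y) + ∑ y, d y * w k y := Finset.sum_add_distrib
      _ = w (k + 1) x := by rw [hQw, hk, add_zero]
  have hzero : ∀ k : ℕ, ∑ z, d z * w k z = 0 := by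
    intro k
    induction k with
    | zero =>
      have hw0 : ∀ z, w 0 z = f z := by
        intro z
        rw [hwdef]
        show (Q ^ 0).mulVec f z = f z
        rw [pow_zero, Matrix.one_mulVec]
      simp only [hw0, hfdef]
      simp only [mul_sub]
      rw [Finset.sum_sub_distrib, ← Finset.sum_mul, hd1, one_mul, sub_self]
    | succ n ih =>
      calc ∑ z, d z * w (n + 1) z = ∑ z, d z * ∑ y, P z y * w n y := by
            refine Finset.sum_congr rfl fun z _ => ?_
            rw [hstep n ih z]
        _ = ∑ y, (∑ z, d z * P z y) * w n y := by
            simp only [Finset.mul_sum]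
            rw [Finset.sum_comm]
            refine Finset.sum_congr rfl fun y _ => ?_
            rw [Finset.sum_mul]
            exact Finset.sum_congr rfl fun z _ => (mul_assoc _ _ _).symm
        _ = ∑ y, d y * w n y := by
            refine Finset.sum_congr rfl fun y _ => ?_
            rw [hstat y]
        _ = 0 := ih
  constructor
  · intro x
    have hPh : ∑ y, P x y * h y = h x - f x := by
      calc ∑ y, P x y * h y = ∑ y, ∑' k, P x y * w k y := by
            refine Finset.sum_congr rfl fun y _ => ?_
            rw [hh y, tsum_mul_left]
        _ = ∑' k, ∑ y, P x y * w k y :=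
            (Summable.tsum_finsetSum fun y _ => (hwsum y).mul_left _).symm
        _ = ∑' k, w (k + 1) x := tsum_congr fun k => hstep k (hzero k) x
        _ = h x - f x := by
            have he : ∑' k, w k x = w 0 x + ∑' k, w (k + 1) x :=
              Summable.tsum_eq_zero_add (hwsum x)
            have hw0 : w 0 x = f x := by
              rw [hwdef]
              show (Q ^ 0).mulVec f x = f x
              rw [pow_zero, Matrix.one_mulVec]
            rw [← hh x, hw0] at he
            linarith
    rw [hPh]
    have hfx : f x = g x - ∑ y, d y * g y := rfl
    rw [← hfx]
    ring
  · calc ∑ x, d x * h x = ∑ x, ∑' k, d x * w k x := by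
          refine Finset.sum_congr rfl fun x _ => ?_
          rw [hh x, tsum_mul_left]
      _ = ∑' k, ∑ x, d x * w k x :=
          (Summable.tsum_finsetSum fun x _ => (hwsum x).mul_left _).symm
      _ = 0 := by
          simp only [hzero]
          exact tsum_zero
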